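/- Let A be a real n×n matrix indexed by a quasi-uniform set D_n ⊂ ℝ^d, with N = ⌊n^{1/d}⌋, and suppose |A_{s,t}| ≤ C (1 + N‖t−s‖₂)^{−(d+ζ)} for all s,t ∈ D_n, where C > 0 is bounded and ζ ≥ 0. Then there is a bounded constant C'' (depending only on C, d, ζ and the quasi-uniformity constants) such that the entries of B = A² satisfy |B_{s,t}| ≤ C'' (1 + N‖t−s‖₂)^{−(d+ζ)} · (1 + [ζ = 0]·log(1 + N‖t−s‖₂)) for all s,t ∈ D_n. (Lemma C.1: the class of matrices with polynomially decaying off-diagonals is almost closed under squaring.) -/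

import Mathlib

open MeasureTheory ProbabilityTheory Filter Matrix BoundedContinuousFunction
open scoped BigOperators ENNReal NNReal Topology Classical

noncomputable section

/-- Points of `ℝ^d` with the Euclidean structure. -/
abbrev Pt (d : ℕ) := EuclideanSpace ℝ (Fin d)

/-- `N = ⌊n^(1/d)⌋`. -/
def Nof (d n : ℕ) : ℕ := Nat.floor ((n : ℝ) ^ ((1 : ℝ) / (d : ℝ)))

/-- Quasi-uniformity of the `n`-point sampling set `D ⊂ ℝ^d`: for every `s ∈ D` there is an
enumeration of `D \ {s}` which is monotone in the distance to `s` (so that its `i`-th element is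
the `i`-th nearest neighbour of `s`), whose distances obey the two-sided bound
`Cmin (i/n)^{1/d} ≤ r_{s,i} ≤ Cmax (i/n)^{1/d}`. -/
def QuasiUniform (d n : ℕ) (Cmin Cmax : ℝ) (D : Finset (Pt d)) : Prop :=
  D.card = n ∧
  ∀ s ∈ D, ∃ g : Fin (n - 1) → Pt d,
    (∀ i, g i ∈ D.erase s) ∧ Function.Injective g ∧
    (∀ t ∈ D.erase s, ∃ i, g i = t) ∧
    (∀ i j : Fin (n - 1), i ≤ j → dist s (g i) ≤ dist s (g j)) ∧
    (∀ i : Fin (n - 1),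
      Cmin * (((i : ℕ) + 1 : ℝ) / (n : ℝ)) ^ ((1 : ℝ) / (d : ℝ)) ≤ dist s (g i) ∧
      dist s (g i) ≤ Cmax * (((i : ℕ) + 1 : ℝ) / (n : ℝ)) ^ ((1 : ℝ) / (d : ℝ)))

/-- Preconditioning neighbourhoods `nb` and coefficients `a` of order `m` for the set `D`:
each `N_m(s) = nb s` lies in `D` within distance `c₀/N` of `s`; the coefficients annihilate all
monomials `(t-s)^r` with `|r|₁ < m`, do not annihilate some monomial with `|r|₁ ≥ m`, and are
normalized in Euclidean norm. -/
def PrecondCoeffs (d m : ℕ) (c₀ : ℝ) (N : ℕ) (D : Finset (Pt d))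
    (nb : Pt d → Finset (Pt d)) (a : Pt d → Pt d → ℝ) : Prop :=
  ∀ s ∈ D,
    nb s ⊆ D ∧
    (∀ t ∈ nb s, ‖t - s‖ ≤ c₀ / (N : ℝ)) ∧
    (∀ r : Fin d → ℕ, (∑ j, r j) < m →
      (∑ t ∈ nb s, a s t * ∏ j, (t j - s j) ^ r j) = 0) ∧
    (∃ r : Fin d → ℕ, m ≤ (∑ j, r j) ∧
      (∑ t ∈ nb s, a s t * ∏ j, (t j - s j) ^ r j) ≠ 0) ∧
    (∑ t ∈ nb s, (a s t) ^ 2) = 1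

/-- The Fourier filter `f^N_s(ω)` of the preconditioning coefficients. -/
def fN (d : ℕ) (ν : ℝ) (N : ℕ) (nb : Pt d → Finset (Pt d))
    (a : Pt d → Pt d → ℝ) (s ω : Pt d) : ℂ :=
  ((‖ω‖ ^ (-(ν + (d : ℝ) / 2)) : ℝ) : ℂ) *
    ∑ t ∈ nb s, ((a s t : ℝ) : ℂ) *
      Complex.exp (Complex.I * ((inner ℝ ((N : ℝ) • ω) (t - s) : ℝ) : ℂ))

/-- `h_N(x) = (1 + (Nx)^{-2})^{-(ν + d/2)}`. -/
def hN (d : ℕ) (ν : ℝ) (N : ℕ) (x : ℝ) : ℝ :=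
  (1 + ((N : ℝ) * x) ^ (-(2 : ℝ))) ^ (-(ν + (d : ℝ) / 2))

/-- The matrix `K_{n,m}(ρ)`, the `φ₀`-normalized covariance matrix of the preconditioned data,
given through its spectral representation. -/
def Kmat {d : ℕ} (ν : ℝ) (N : ℕ) (D : Finset (Pt d))
    (nb : Pt d → Finset (Pt d)) (a : Pt d → Pt d → ℝ) (ρ : ℝ) :
    Matrix D D ℝ :=
  Matrix.of fun s t =>
    ρ ^ (-(2 * ν)) *
      (∫ (ω : Pt d),
        Complex.exp (Complex.I * ((inner ℝ ((t : Pt d) - (s : Pt d)) ω : ℝ) : ℂ)) *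
          fN d ν N nb a (s : Pt d) ω * (starRingEnd ℂ) (fN d ν N nb a (t : Pt d) ω) *
          ((hN d ν N (ρ * ‖ω‖) : ℝ) : ℂ)).re

/-- Block-diagonal restriction of a matrix along the partition determined by a labelling `bin`. -/
def bdiag {d : ℕ} {D : Finset (Pt d)} (bin : Pt d → ℕ) (A : Matrix D D ℝ) :
    Matrix D D ℝ :=
  Matrix.of fun s t => if bin (s : Pt d) = bin (t : Pt d) then A s t else 0

/-- `L_{n,m}(ρ) = ρ^{2ν} K_{n,m}(ρ)`. -/
def Lmat {d : ℕ} (ν : ℝ) (N : ℕ) (D : Finset (Pt d))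
    (nb : Pt d → Finset (Pt d)) (a : Pt d → Pt d → ℝ) (ρ : ℝ) :
    Matrix D D ℝ :=
  ρ ^ (2 * ν) • Kmat ν N D nb a ρ

/-- `K^B_{n,m}(ρ)`: the block-diagonal approximation of `K_{n,m}(ρ)`. -/
def KmatB {d : ℕ} (ν : ℝ) (N : ℕ) (D : Finset (Pt d))
    (nb : Pt d → Finset (Pt d)) (a : Pt d → Pt d → ℝ) (bin : Pt d → ℕ) (ρ : ℝ) :
    Matrix D D ℝ := bdiag bin (Kmat ν N D nb a ρ)

/-- `L^B_{n,m}(ρ) = ρ^{2ν} K^B_{n,m}(ρ)`. -/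
def LmatB {d : ℕ} (ν : ℝ) (N : ℕ) (D : Finset (Pt d))
    (nb : Pt d → Finset (Pt d)) (a : Pt d → Pt d → ℝ) (bin : Pt d → ℕ) (ρ : ℝ) :
    Matrix D D ℝ := bdiag bin (Lmat ν N D nb a ρ)

/-- Euclidean norm of a finite-dimensional real vector. -/
def eNorm {ι : Type*} [Fintype ι] (v : ι → ℝ) : ℝ := Real.sqrt (∑ i, (v i) ^ 2)

/-- Frobenius norm of a real matrix. -/
def frobNorm {ι : Type*} [Fintype ι] (A : Matrix ι ι ℝ) : ℝ :=
  Real.sqrt (∑ i, ∑ j, (A i j) ^ 2)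

/-- The `ℓ² → ℓ²` operator (spectral) norm of a real matrix. -/
def opNorm {ι : Type*} [Fintype ι] (A : Matrix ι ι ℝ) : ℝ :=
  sSup {c : ℝ | ∃ v : ι → ℝ, eNorm v ≤ 1 ∧ c = eNorm (A.mulVec v)}

/-- The nuclear norm (sum of singular values): trace of the psd square root of `Aᵀ A`. -/
def nucNorm {ι : Type*} [Fintype ι] [DecidableEq ι] (A : Matrix ι ι ℝ) : ℝ :=
  (let hA := Matrix.posSemidef_conjTranspose_mul_self A
   (hA.1.eigenvectorUnitary : Matrix ι ι ℝ) * Matrix.diagonal (Real.sqrt ∘ hA.1.eigenvalues) *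
     (star hA.1.eigenvectorUnitary : Matrix ι ι ℝ)).trace

/-- The standard Gaussian product measure on `ι → ℝ`. -/
def stdGaussianPi (ι : Type*) [Fintype ι] : Measure (ι → ℝ) :=
  Measure.pi fun _ => gaussianReal 0 1

end

set_option maxHeartbeats 2000000

namespace LemC1

lemma sq_tail' (K : ℕ) (hK : 1 ≤ K) (M : ℕ) (hM : K ≤ M) :
    ∑ k ∈ Finset.Icc K M, ((k:ℝ)^2)⁻¹ ≤ 2 / K - 1 / M := by
  induction M, hM using Nat.le_induction with
  | base =>
    have hK1 : (1:ℝ) ≤ K := by exact_mod_cast hK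
    rw [Finset.Icc_self, Finset.sum_singleton]
    have h1 : ((K:ℝ)^2)⁻¹ ≤ 1/K := by
      rw [one_div]
      apply inv_anti₀ (by linarith)
      nlinarith
    have : 2/(K:ℝ) - 1/K = 1/K := by ring
    linarith
  | succ M hKM ih =>
    have hM1 : (1:ℝ) ≤ M := by exact_mod_cast le_trans hK hKM
    rw [Finset.sum_Icc_succ_top (by omega)]
    push_cast
    have key : (((M:ℝ)+1)^2)⁻¹ ≤ 1/(M:ℝ) - 1/((M:ℝ)+1) := by
      rw [inv_eq_one_div, div_sub_div _ _ (by linarith) (by linarith),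
        div_le_div_iff₀ (by positivity) (by positivity)]
      nlinarith
    linarith

lemma sq_tail (K : ℕ) (hK : 1 ≤ K) (M : ℕ) :
    ∑ k ∈ Finset.Icc K M, ((k:ℝ)^2)⁻¹ ≤ 2 / K := by
  rcases le_or_gt K M with h | h
  · have hM1 : (1:ℝ) ≤ M := by exact_mod_cast le_trans hK h
    have h0 : (0:ℝ) ≤ 1/M := by positivity
    linarith [sq_tail' K hK M h]
  · rw [Finset.Icc_eq_empty (by omega)]
    simp
    positivity

lemma harm_le (M : ℕ) : ∑ k ∈ Finset.range M, ((k:ℝ)+1)⁻¹ ≤ 1 + Real.log M := by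
  have h := harmonic_le_one_add_log M
  have h2 : ((harmonic M : ℚ) : ℝ) = ∑ k ∈ Finset.range M, ((k:ℝ)+1)⁻¹ := by
    unfold harmonic
    push_cast
    rfl
  linarith

lemma term_bound {c y : ℝ} (hc : 0 < c) (k d : ℕ) (hk : 1 ≤ k) {e : ℝ} (he : 0 ≤ e)
    (hy : c * (k:ℝ) ^ ((1:ℝ)/(d:ℝ)) ≤ y) :
    (1 + y) ^ (-e) ≤ c ^ (-e) * (k:ℝ) ^ (-(e/(d:ℝ))) := by
  have hk0 : (0:ℝ) < k := by exact_mod_cast hk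
  have hkp : (0:ℝ) < (k:ℝ) ^ ((1:ℝ)/(d:ℝ)) := Real.rpow_pos_of_pos hk0 _
  have h1 : 0 < c * (k:ℝ) ^ ((1:ℝ)/(d:ℝ)) := by positivity
  have h2 : c * (k:ℝ) ^ ((1:ℝ)/(d:ℝ)) ≤ 1 + y := by linarith
  calc (1+y)^(-e) ≤ (c * (k:ℝ) ^ ((1:ℝ)/(d:ℝ)))^(-e) :=
        Real.rpow_le_rpow_of_nonpos h1 h2 (neg_nonpos.mpr he)
    _ = c^(-e) * ((k:ℝ) ^ ((1:ℝ)/(d:ℝ)))^(-e) := Real.mul_rpow hc.le hkp.le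
    _ = c^(-e) * (k:ℝ) ^ (-(e/(d:ℝ))) := by
        rw [← Real.rpow_mul hk0.le]
        ring_nf

lemma near_fin {m : ℕ} (d : ℕ) (hd : 1 ≤ d) {c : ℝ} (hc : 0 < c)
    (ρ : Fin m → ℝ) (cond : Fin m → Prop)
    (hρ : ∀ i : Fin m, c * (((i:ℕ):ℝ)+1) ^ ((1:ℝ)/(d:ℝ)) ≤ ρ i)
    (M : ℕ) (hM : ∀ i, cond i → (i:ℕ)+1 ≤ M) :
    ∑ i, (if cond i then (1 + ρ i) ^ (-(d:ℝ)) else 0)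
      ≤ c ^ (-(d:ℝ)) * (1 + Real.log M) := by
  have hd0 : (d:ℝ) ≠ 0 := by positivity
  have step : ∀ i : Fin m, (if cond i then (1 + ρ i) ^ (-(d:ℝ)) else 0) ≤
      (if (i:ℕ)+1 ≤ M then c ^ (-(d:ℝ)) * (((i:ℕ):ℝ)+1)⁻¹ else 0) := by
    intro i
    by_cases h : cond i
    · rw [if_pos h, if_pos (hM i h)]
      have hb := term_bound hc ((i:ℕ)+1) d (by omega)
        (by positivity : (0:ℝ) ≤ (d:ℝ)) (y := ρ i) (by push_cast; exact hρ i)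
      have he : (d:ℝ)/(d:ℝ) = 1 := div_self hd0
      rw [he] at hb
      push_cast at hb
      rwa [Real.rpow_neg_one] at hb
    · rw [if_neg h]
      split
      · positivity
      · exact le_rfl
  calc ∑ i, (if cond i then (1 + ρ i) ^ (-(d:ℝ)) else 0)
      ≤ ∑ i : Fin m, (if (i:ℕ)+1 ≤ M then c ^ (-(d:ℝ)) * (((i:ℕ):ℝ)+1)⁻¹ else 0) :=
        Finset.sum_le_sum (fun i _ => step i)
    _ = c ^ (-(d:ℝ)) * ∑ i : Fin m, (if (i:ℕ)+1 ≤ M then (((i:ℕ):ℝ)+1)⁻¹ else 0) := by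
        rw [Finset.mul_sum]
        congr 1; ext i
        split <;> simp
    _ ≤ c ^ (-(d:ℝ)) * (1 + Real.log M) := by
        apply mul_le_mul_of_nonneg_left _ (by positivity)
        rw [Fin.sum_univ_eq_sum_range (fun k => if k+1 ≤ M then ((k:ℝ)+1)⁻¹ else 0) m]
        rw [Finset.sum_ite, Finset.sum_const_zero, add_zero]
        calc ∑ k ∈ (Finset.range m).filter (fun k => k+1 ≤ M), ((k:ℝ)+1)⁻¹
            ≤ ∑ k ∈ Finset.range M, ((k:ℝ)+1)⁻¹ := by
              apply Finset.sum_le_sum_of_subset_of_nonneg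
              · intro k hk
                simp only [Finset.mem_filter, Finset.mem_range] at hk ⊢
                omega
              · intros; positivity
          _ ≤ 1 + Real.log M := harm_le M

lemma shift_sum (m : ℕ) (f : ℕ → ℝ) :
    ∑ k ∈ Finset.range m, f (k+1) = ∑ j ∈ Finset.Icc 1 m, f j := by
  rw [← Finset.Ico_add_one_right_eq_Icc, Finset.sum_Ico_eq_sum_range]
  norm_num
  exact Finset.sum_congr rfl (fun k _ => by rw [Nat.add_comm])

lemma far_fin {m : ℕ} (d : ℕ) (hd : 1 ≤ d) {c : ℝ} (hc : 0 < c)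
    (ρ : Fin m → ℝ) (cond : Fin m → Prop)
    (hρ : ∀ i : Fin m, c * (((i:ℕ):ℝ)+1) ^ ((1:ℝ)/(d:ℝ)) ≤ ρ i)
    (K : ℕ) (hK : 1 ≤ K) (hKc : ∀ i : Fin m, cond i → K ≤ (i:ℕ)+1) :
    ∑ i, (if cond i then (1 + ρ i) ^ (-(2*(d:ℝ))) else 0)
      ≤ c ^ (-(2*(d:ℝ))) * (2 / K) := by
  have hd0 : (d:ℝ) ≠ 0 := by positivity
  have step : ∀ i : Fin m, (if cond i then (1 + ρ i) ^ (-(2*(d:ℝ))) else 0) ≤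
      (if K ≤ (i:ℕ)+1 then c ^ (-(2*(d:ℝ))) * (((((i:ℕ)+1:ℕ)):ℝ)^2)⁻¹ else 0) := by
    intro i
    by_cases h : cond i
    · rw [if_pos h, if_pos (hKc i h)]
      have hb := term_bound hc ((i:ℕ)+1) d (by omega)
        (by positivity : (0:ℝ) ≤ 2*(d:ℝ)) (y := ρ i) (by push_cast; exact hρ i)
      have he : (2*(d:ℝ))/(d:ℝ) = 2 := by field_simp
      rw [he] at hb
      have h2 : ((((i:ℕ)+1:ℕ)):ℝ) ^ (-(2:ℝ)) = (((((i:ℕ)+1:ℕ)):ℝ)^(2:ℕ))⁻¹ := by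
        rw [← Real.rpow_natCast ((((i:ℕ)+1:ℕ)):ℝ) 2, ← Real.rpow_neg (by positivity)]
        norm_num
      rw [h2] at hb
      exact hb
    · rw [if_neg h]
      split
      · positivity
      · exact le_rfl
  calc ∑ i, (if cond i then (1 + ρ i) ^ (-(2*(d:ℝ))) else 0)
      ≤ ∑ i : Fin m, (if K ≤ (i:ℕ)+1 then c ^ (-(2*(d:ℝ))) * (((((i:ℕ)+1:ℕ)):ℝ)^2)⁻¹ else 0) :=
        Finset.sum_le_sum (fun i _ => step i)
    _ = ∑ k ∈ Finset.range m, (if K ≤ k+1 then c ^ (-(2*(d:ℝ))) * ((((k+1:ℕ)):ℝ)^2)⁻¹ else 0) :=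
        Fin.sum_univ_eq_sum_range (fun k => if K ≤ k+1 then c ^ (-(2*(d:ℝ))) * ((((k+1:ℕ)):ℝ)^2)⁻¹ else 0) m
    _ = ∑ j ∈ Finset.Icc 1 m, (if K ≤ j then c ^ (-(2*(d:ℝ))) * (((j:ℕ):ℝ)^2)⁻¹ else 0) :=
        shift_sum m (fun j => if K ≤ j then c ^ (-(2*(d:ℝ))) * (((j:ℕ):ℝ)^2)⁻¹ else 0)
    _ ≤ c ^ (-(2*(d:ℝ))) * (2 / K) := by
        rw [Finset.sum_ite, Finset.sum_const_zero, add_zero, ← Finset.mul_sum]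
        apply mul_le_mul_of_nonneg_left _ (by positivity)
        calc ∑ j ∈ (Finset.Icc 1 m).filter (fun j => K ≤ j), (((j:ℕ):ℝ)^2)⁻¹
            ≤ ∑ j ∈ Finset.Icc K m, ((j:ℝ)^2)⁻¹ := by
              apply Finset.sum_le_sum_of_subset_of_nonneg
              · intro j hj
                simp only [Finset.mem_filter, Finset.mem_Icc] at hj ⊢
                omega
              · intros; positivity
          _ ≤ 2 / K := sq_tail K hK m

lemma all_fin {m : ℕ} (d : ℕ) (hd : 1 ≤ d) {c ζ : ℝ} (hc : 0 < c) (hζ : 0 < ζ)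
    (ρ : Fin m → ℝ)
    (hρ : ∀ i : Fin m, c * (((i:ℕ):ℝ)+1) ^ ((1:ℝ)/(d:ℝ)) ≤ ρ i) :
    ∑ i, (1 + ρ i) ^ (-((d:ℝ)+ζ))
      ≤ c ^ (-((d:ℝ)+ζ)) * (∑' k : ℕ, ((k:ℝ) ^ ((1:ℝ) + ζ/(d:ℝ)))⁻¹) := by
  have hd0 : (0:ℝ) < (d:ℝ) := by exact_mod_cast hd
  have hp : 1 < (1:ℝ) + ζ/(d:ℝ) := by
    have : 0 < ζ/(d:ℝ) := by positivity
    linarith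
  have hsum : Summable (fun k : ℕ => ((k:ℝ) ^ ((1:ℝ) + ζ/(d:ℝ)))⁻¹) :=
    Real.summable_nat_rpow_inv.mpr hp
  have step : ∀ i : Fin m, (1 + ρ i) ^ (-((d:ℝ)+ζ)) ≤
      c ^ (-((d:ℝ)+ζ)) * (((((i:ℕ)+1:ℕ)):ℝ) ^ ((1:ℝ) + ζ/(d:ℝ)))⁻¹ := by
    intro i
    have hb := term_bound hc ((i:ℕ)+1) d (by omega)
      (by positivity : (0:ℝ) ≤ (d:ℝ)+ζ) (y := ρ i) (by push_cast; exact hρ i)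
    have he : ((d:ℝ)+ζ)/(d:ℝ) = 1 + ζ/(d:ℝ) := by field_simp
    rw [he] at hb
    have h2 : ((((i:ℕ)+1:ℕ)):ℝ) ^ (-((1:ℝ) + ζ/(d:ℝ)))
        = (((((i:ℕ)+1:ℕ)):ℝ) ^ ((1:ℝ) + ζ/(d:ℝ)))⁻¹ :=
      Real.rpow_neg (by positivity) _
    rw [h2] at hb
    exact hb
  calc ∑ i, (1 + ρ i) ^ (-((d:ℝ)+ζ))
      ≤ ∑ i : Fin m, c ^ (-((d:ℝ)+ζ)) * (((((i:ℕ)+1:ℕ)):ℝ) ^ ((1:ℝ) + ζ/(d:ℝ)))⁻¹ :=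
        Finset.sum_le_sum (fun i _ => step i)
    _ = c ^ (-((d:ℝ)+ζ)) * ∑ k ∈ Finset.range m, ((((k+1:ℕ)):ℝ) ^ ((1:ℝ) + ζ/(d:ℝ)))⁻¹ := by
        rw [← Finset.mul_sum]
        congr 1
        exact Fin.sum_univ_eq_sum_range (fun k => ((((k+1:ℕ)):ℝ) ^ ((1:ℝ) + ζ/(d:ℝ)))⁻¹) m
    _ ≤ c ^ (-((d:ℝ)+ζ)) * (∑' k : ℕ, ((k:ℝ) ^ ((1:ℝ) + ζ/(d:ℝ)))⁻¹) := by
        apply mul_le_mul_of_nonneg_left _ (by positivity)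
        rw [shift_sum m (fun j => (((j:ℕ):ℝ) ^ ((1:ℝ) + ζ/(d:ℝ)))⁻¹)]
        exact Summable.sum_le_tsum _ (fun i _ => by positivity) hsum

lemma sum_enum {d n : ℕ} {D : Finset (Pt d)} {p : Pt d} {g : Fin (n-1) → Pt d}
    (hg1 : ∀ i, g i ∈ D.erase p) (hg2 : Function.Injective g)
    (hg3 : ∀ t ∈ D.erase p, ∃ i, g i = t) (hp : p ∈ D) (f : Pt d → ℝ) :
    ∑ u ∈ D, f u = f p + ∑ i, f (g i) := by
  rw [← Finset.add_sum_erase D f hp]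
  congr 1
  exact (Finset.sum_bij (fun i _ => g i) (fun i _ => hg1 i)
    (fun i _ j _ h => hg2 h)
    (fun b hb => by obtain ⟨i, hi⟩ := hg3 b hb; exact ⟨i, Finset.mem_univ i, hi⟩)
    (fun i _ => rfl)).symm

section facts
variable {d n N : ℕ} {Cmin Cmax : ℝ}

lemma xfacts (hd : 1 ≤ d) (hn : 1 ≤ n) :
    (1:ℝ) ≤ (n:ℝ) ^ ((1:ℝ)/(d:ℝ)) ∧ ((n:ℝ) ^ ((1:ℝ)/(d:ℝ))) ^ (d:ℝ) = n := by
  have hn1 : (1:ℝ) ≤ (n:ℝ) := by exact_mod_cast hn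
  have hd0 : (d:ℝ) ≠ 0 := by positivity
  constructor
  · calc (1:ℝ) = (1:ℝ) ^ ((1:ℝ)/(d:ℝ)) := (Real.one_rpow _).symm
      _ ≤ (n:ℝ) ^ ((1:ℝ)/(d:ℝ)) := Real.rpow_le_rpow zero_le_one hn1 (by positivity)
  · rw [← Real.rpow_mul (by linarith), one_div_mul_cancel hd0, Real.rpow_one]

lemma rho_lower (hd : 1 ≤ d) (hCmin : 0 < Cmin) (hn : 1 ≤ n)
    (hx2N : ((n:ℝ) ^ ((1:ℝ)/(d:ℝ))) ≤ 2*(N:ℝ)) {k : ℕ} {δ : ℝ}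
    (hδ : Cmin * (((k:ℝ))/(n:ℝ)) ^ ((1:ℝ)/(d:ℝ)) ≤ δ) :
    (Cmin/2) * (k:ℝ) ^ ((1:ℝ)/(d:ℝ)) ≤ (N:ℝ) * δ := by
  obtain ⟨hx1, -⟩ := xfacts (n := n) hd hn
  set x := (n:ℝ) ^ ((1:ℝ)/(d:ℝ)) with hxdef
  have hx0 : 0 < x := by linarith
  have hn0 : (0:ℝ) < n := by exact_mod_cast hn
  have hkdiv : (((k:ℝ))/(n:ℝ)) ^ ((1:ℝ)/(d:ℝ)) = (k:ℝ) ^ ((1:ℝ)/(d:ℝ)) / x := by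
    rw [Real.div_rpow (by positivity) (by positivity)]
  set a := (k:ℝ) ^ ((1:ℝ)/(d:ℝ)) with hadef
  have ha0 : 0 ≤ a := Real.rpow_nonneg (by positivity) _
  rw [hkdiv] at hδ
  have h1 : (N:ℝ) * (Cmin * (a/x)) ≤ (N:ℝ) * δ :=
    mul_le_mul_of_nonneg_left hδ (by positivity)
  have h2 : (x/2) * (Cmin * (a/x)) ≤ (N:ℝ) * (Cmin * (a/x)) :=
    mul_le_mul_of_nonneg_right (by linarith) (by positivity)
  have h3 : (x/2) * (Cmin * (a/x)) = (Cmin/2) * a := by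
    field_simp
  linarith

lemma k_le_near (hd : 1 ≤ d) (hCmin : 0 < Cmin) (hn : 1 ≤ n) {k : ℕ} {δ R : ℝ}
    (hδlow : Cmin * (((k:ℝ))/(n:ℝ)) ^ ((1:ℝ)/(d:ℝ)) ≤ δ) (hδR : δ ≤ R) :
    (k:ℝ) ≤ (n:ℝ) * (R/Cmin) ^ ((d:ℝ)) := by
  have hd0 : (d:ℝ) ≠ 0 := by positivity
  have hn0 : (0:ℝ) < n := by exact_mod_cast hn
  have h1 : (((k:ℝ))/(n:ℝ)) ^ ((1:ℝ)/(d:ℝ)) ≤ R/Cmin := by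
    rw [le_div_iff₀ hCmin]
    calc (((k:ℝ))/(n:ℝ)) ^ ((1:ℝ)/(d:ℝ)) * Cmin
        = Cmin * (((k:ℝ))/(n:ℝ)) ^ ((1:ℝ)/(d:ℝ)) := by ring
      _ ≤ δ := hδlow
      _ ≤ R := hδR
  have h2 : ((((k:ℝ))/(n:ℝ)) ^ ((1:ℝ)/(d:ℝ))) ^ (d:ℝ) ≤ (R/Cmin) ^ (d:ℝ) :=
    Real.rpow_le_rpow (Real.rpow_nonneg (by positivity) _) h1 (by positivity)
  rw [← Real.rpow_mul (by positivity), one_div_mul_cancel hd0, Real.rpow_one] at h2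
  rw [div_le_iff₀ hn0] at h2
  calc (k:ℝ) ≤ (R/Cmin) ^ (d:ℝ) * n := h2
    _ = (n:ℝ) * (R/Cmin) ^ (d:ℝ) := by ring

lemma k_ge_far (hd : 1 ≤ d) (hCmax : 0 < Cmax) (hn : 1 ≤ n) {k : ℕ} {δ R : ℝ}
    (hR : 0 ≤ R)
    (hδup : δ ≤ Cmax * (((k:ℝ))/(n:ℝ)) ^ ((1:ℝ)/(d:ℝ))) (hRδ : R ≤ δ) :
    (n:ℝ) * (R/Cmax) ^ ((d:ℝ)) ≤ (k:ℝ) := by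
  have hd0 : (d:ℝ) ≠ 0 := by positivity
  have hn0 : (0:ℝ) < n := by exact_mod_cast hn
  have h1 : R/Cmax ≤ (((k:ℝ))/(n:ℝ)) ^ ((1:ℝ)/(d:ℝ)) := by
    rw [div_le_iff₀ hCmax]
    calc R ≤ δ := hRδ
      _ ≤ Cmax * (((k:ℝ))/(n:ℝ)) ^ ((1:ℝ)/(d:ℝ)) := hδup
      _ = (((k:ℝ))/(n:ℝ)) ^ ((1:ℝ)/(d:ℝ)) * Cmax := by ring
  have h2 : (R/Cmax) ^ (d:ℝ) ≤ ((((k:ℝ))/(n:ℝ)) ^ ((1:ℝ)/(d:ℝ))) ^ (d:ℝ) :=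
    Real.rpow_le_rpow (by positivity) h1 (by positivity)
  rw [← Real.rpow_mul (by positivity), one_div_mul_cancel hd0, Real.rpow_one] at h2
  rw [le_div_iff₀ hn0] at h2
  calc (n:ℝ) * (R/Cmax) ^ (d:ℝ) = (R/Cmax) ^ (d:ℝ) * n := by ring
    _ ≤ k := h2

end facts

noncomputable def Tp (d : ℕ) (ζ : ℝ) : ℝ := ∑' k : ℕ, ((k:ℝ) ^ ((1:ℝ) + ζ/(d:ℝ)))⁻¹

section points
variable {d n N : ℕ} {Cmin Cmax : ℝ} {D : Finset (Pt d)}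

lemma point_near (hd : 1 ≤ d) (hCmin : 0 < Cmin) (hn : 1 ≤ n)
    (hQ : QuasiUniform d n Cmin Cmax D)
    (hx2N : ((n:ℝ) ^ ((1:ℝ)/(d:ℝ))) ≤ 2*(N:ℝ))
    (p : Pt d) (hp : p ∈ D) (R : ℝ) (hR : 0 ≤ R) :
    ∑ u ∈ D, (if dist u p ≤ R then (1 + (N:ℝ) * dist u p) ^ (-(d:ℝ)) else 0)
      ≤ 1 + (Cmin/2) ^ (-(d:ℝ)) *
          (1 + d * Real.log (max 1 (2/Cmin)) + d * Real.log (1 + (N:ℝ)*R)) := by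
  obtain ⟨hcard, hQ2⟩ := hQ
  obtain ⟨g, hg1, hg2, hg3, -, hg5⟩ := hQ2 p hp
  obtain ⟨hx1, hxd⟩ := xfacts (n := n) hd hn
  set x := (n:ℝ) ^ ((1:ℝ)/(d:ℝ)) with hxdef
  have hNR : (0:ℝ) ≤ (N:ℝ)*R := by positivity
  set c₅ : ℝ := max 1 (2/Cmin) with hc5def
  have hc51 : (1:ℝ) ≤ c₅ := le_max_left _ _
  set Y : ℝ := (c₅ * (1 + (N:ℝ)*R)) ^ (d:ℝ) with hYdef
  have hbase1 : (1:ℝ) ≤ c₅ * (1 + (N:ℝ)*R) := by nlinarith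
  have hY1 : (1:ℝ) ≤ Y := Real.one_le_rpow hbase1 (by positivity)
  set M : ℕ := ⌊Y⌋₊ with hMdef
  rw [sum_enum hg1 hg2 hg3 hp]
  have hdiag : (if dist p p ≤ R then (1 + (N:ℝ) * dist p p) ^ (-(d:ℝ)) else 0) = 1 := by
    rw [dist_self, if_pos hR]
    norm_num
  rw [hdiag]
  have hlogM : Real.log M ≤ (d:ℝ) * Real.log c₅ + (d:ℝ) * Real.log (1 + (N:ℝ)*R) := by
    have hlogY : Real.log Y = (d:ℝ) * Real.log c₅ + (d:ℝ) * Real.log (1 + (N:ℝ)*R) := by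
      rw [hYdef, Real.log_rpow (by linarith), Real.log_mul (by linarith) (by linarith)]
      ring
    rcases Nat.eq_zero_or_pos M with h0 | h0
    · rw [h0]
      simp only [Nat.cast_zero, Real.log_zero]
      rw [← hlogY]
      exact Real.log_nonneg hY1
    · rw [← hlogY]
      apply Real.log_le_log (by exact_mod_cast h0)
      exact Nat.floor_le (by linarith)
  apply add_le_add_right
  have hsum : ∑ i : Fin (n-1),
      (if dist (g i) p ≤ R then (1 + (N:ℝ) * dist (g i) p) ^ (-(d:ℝ)) else 0)
      ≤ (Cmin/2) ^ (-(d:ℝ)) * (1 + Real.log M) := by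
    apply near_fin d hd (by positivity : (0:ℝ) < Cmin/2)
      (fun i => (N:ℝ) * dist (g i) p) (fun i => dist (g i) p ≤ R)
    · intro i
      have h := rho_lower (n := n) (N := N) (k := (i:ℕ)+1) (δ := dist p (g i))
        hd hCmin hn hx2N (by push_cast; exact (hg5 i).1)
      rw [dist_comm]
      push_cast at h
      exact h
    · intro i hcond
      have hk : ((i:ℕ):ℝ)+1 ≤ (n:ℝ) * (R/Cmin) ^ ((d:ℝ)) := by
        have hcond' : dist p (g i) ≤ R := by rw [dist_comm]; exact hcond
        have := k_le_near (n := n) (k := (i:ℕ)+1) (δ := dist p (g i)) (R := R)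
          hd hCmin hn (by push_cast; exact (hg5 i).1) hcond'
        push_cast at this
        exact this
      have hchain : (n:ℝ) * (R/Cmin) ^ ((d:ℝ)) ≤ Y := by
        have h1 : (n:ℝ) * (R/Cmin) ^ ((d:ℝ)) = (x * (R/Cmin)) ^ (d:ℝ) := by
          rw [Real.mul_rpow (by positivity) (by positivity), hxd]
        have h2 : x * (R/Cmin) ≤ c₅ * (1 + (N:ℝ)*R) := by
          have hxR : x * (R/Cmin) ≤ (2*(N:ℝ)) * (R/Cmin) :=
            mul_le_mul_of_nonneg_right hx2N (by positivity)
          have h3 : (2*(N:ℝ)) * (R/Cmin) = (2/Cmin) * ((N:ℝ)*R) := by ring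
          have h4 : (2/Cmin) * ((N:ℝ)*R) ≤ c₅ * ((N:ℝ)*R) :=
            mul_le_mul_of_nonneg_right (le_max_right _ _) hNR
          have h5 : c₅ * ((N:ℝ)*R) ≤ c₅ * (1 + (N:ℝ)*R) := by nlinarith
          linarith
        rw [h1, hYdef]
        exact Real.rpow_le_rpow (by positivity) h2 (by positivity)
      have : ((i:ℕ):ℝ)+1 ≤ Y := le_trans hk hchain
      have := Nat.le_floor (by push_cast; linarith : (((i:ℕ)+1:ℕ):ℝ) ≤ Y)
      omega
  calc ∑ i : Fin (n-1),
      (if dist (g i) p ≤ R then (1 + (N:ℝ) * dist (g i) p) ^ (-(d:ℝ)) else 0)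
      ≤ (Cmin/2) ^ (-(d:ℝ)) * (1 + Real.log M) := hsum
    _ ≤ (Cmin/2) ^ (-(d:ℝ)) *
        (1 + d * Real.log c₅ + d * Real.log (1 + (N:ℝ)*R)) := by
        apply mul_le_mul_of_nonneg_left _ (by positivity)
        linarith

end points

section points2
variable {d n N : ℕ} {Cmin Cmax : ℝ} {D : Finset (Pt d)}

lemma point_far (hd : 1 ≤ d) (hCmin : 0 < Cmin) (hCmax : 0 < Cmax) (hn : 1 ≤ n)
    (hQ : QuasiUniform d n Cmin Cmax D)
    (hx2N : ((n:ℝ) ^ ((1:ℝ)/(d:ℝ))) ≤ 2*(N:ℝ))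
    (hNx : (N:ℝ) ≤ (n:ℝ) ^ ((1:ℝ)/(d:ℝ)))
    (p : Pt d) (hp : p ∈ D) (R : ℝ) (hR : 0 ≤ R) :
    ∑ u ∈ D, (if R ≤ dist u p then (1 + (N:ℝ) * dist u p) ^ (-(2*(d:ℝ))) else 0)
      ≤ (1 + 2 * (Cmin/2) ^ (-(2*(d:ℝ))) * (1+Cmax) ^ ((d:ℝ))) *
          (1 + (N:ℝ)*R) ^ (-(d:ℝ)) := by
  obtain ⟨hcard, hQ2⟩ := hQ
  obtain ⟨g, hg1, hg2, hg3, -, hg5⟩ := hQ2 p hp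
  obtain ⟨hx1, hxd⟩ := xfacts (n := n) hd hn
  set x := (n:ℝ) ^ ((1:ℝ)/(d:ℝ)) with hxdef
  have hNR : (0:ℝ) ≤ (N:ℝ)*R := by positivity
  have hP0 : (0:ℝ) < (1 + (N:ℝ)*R) ^ ((d:ℝ)) := by positivity
  have hQ0 : (0:ℝ) < (1+Cmax) ^ ((d:ℝ)) := by positivity
  set K : ℕ := max 1 ⌈(n:ℝ) * (R/Cmax) ^ ((d:ℝ))⌉₊ with hKdef
  have hK1 : 1 ≤ K := le_max_left _ _
  have hK0 : (0:ℝ) < K := by exact_mod_cast hK1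
  rw [sum_enum hg1 hg2 hg3 hp]
  have hdiag : (if R ≤ dist p p then (1 + (N:ℝ) * dist p p) ^ (-(2*(d:ℝ))) else 0)
      ≤ (1 + (N:ℝ)*R) ^ (-(d:ℝ)) := by
    rw [dist_self]
    split
    · have hR0 : R = 0 := le_antisymm (by assumption) hR
      rw [hR0]
      norm_num
    · positivity
  -- key inequality
  have hkey : (1 + (N:ℝ)*R) ^ ((d:ℝ)) ≤ (1+Cmax) ^ ((d:ℝ)) * K := by
    rcases le_or_gt ((N:ℝ)*R) Cmax with hcase | hcase
    · have h1 : (1 + (N:ℝ)*R) ^ ((d:ℝ)) ≤ (1+Cmax) ^ ((d:ℝ)) :=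
        Real.rpow_le_rpow (by linarith) (by linarith) (by positivity)
      have h2 : (1:ℝ) ≤ (K:ℝ) := by exact_mod_cast hK1
      nlinarith
    · have hb1 : (1:ℝ) < (N:ℝ)*R/Cmax := by
        rw [lt_div_iff₀ hCmax]; linarith
      have h1 : 1 + (N:ℝ)*R ≤ (1+Cmax) * ((N:ℝ)*R/Cmax) := by
        have : (1+Cmax) * ((N:ℝ)*R/Cmax) = (N:ℝ)*R/Cmax + (N:ℝ)*R := by
          field_simp
        rw [this]; linarith
      have h2 : (1 + (N:ℝ)*R) ^ ((d:ℝ)) ≤ ((1+Cmax) * ((N:ℝ)*R/Cmax)) ^ ((d:ℝ)) :=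
        Real.rpow_le_rpow (by linarith) h1 (by positivity)
      have h3 : ((1+Cmax) * ((N:ℝ)*R/Cmax)) ^ ((d:ℝ))
          = (1+Cmax) ^ ((d:ℝ)) * ((N:ℝ)*R/Cmax) ^ ((d:ℝ)) :=
        Real.mul_rpow (by linarith) (by positivity)
      have h4 : ((N:ℝ)*R/Cmax) ^ ((d:ℝ)) ≤ (K:ℝ) := by
        have e1 : (N:ℝ)*R/Cmax = (N:ℝ) * (R/Cmax) := by ring
        have e2 : ((N:ℝ) * (R/Cmax)) ^ ((d:ℝ))
            = (N:ℝ) ^ ((d:ℝ)) * (R/Cmax) ^ ((d:ℝ)) :=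
          Real.mul_rpow (by positivity) (by positivity)
        have e3 : (N:ℝ) ^ ((d:ℝ)) ≤ x ^ ((d:ℝ)) :=
          Real.rpow_le_rpow (by positivity) hNx (by positivity)
        have e4 : (N:ℝ) ^ ((d:ℝ)) * (R/Cmax) ^ ((d:ℝ)) ≤ (n:ℝ) * (R/Cmax) ^ ((d:ℝ)) := by
          rw [← hxd]
          exact mul_le_mul_of_nonneg_right e3 (by positivity)
        have e5 : (n:ℝ) * (R/Cmax) ^ ((d:ℝ)) ≤ (⌈(n:ℝ) * (R/Cmax) ^ ((d:ℝ))⌉₊ : ℝ) :=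
          Nat.le_ceil _
        have e6 : ((⌈(n:ℝ) * (R/Cmax) ^ ((d:ℝ))⌉₊ : ℕ) : ℝ) ≤ (K:ℝ) := by
          have h7 := le_max_right 1 ⌈(n:ℝ) * (R/Cmax) ^ ((d:ℝ))⌉₊
          rw [hKdef]
          exact_mod_cast h7
        rw [e1, e2]
        linarith
      calc (1 + (N:ℝ)*R) ^ ((d:ℝ)) ≤ (1+Cmax) ^ ((d:ℝ)) * ((N:ℝ)*R/Cmax) ^ ((d:ℝ)) := by
            rw [← h3]; exact h2
        _ ≤ (1+Cmax) ^ ((d:ℝ)) * K := mul_le_mul_of_nonneg_left h4 (by positivity)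
  have htail : ∑ i : Fin (n-1),
      (if R ≤ dist (g i) p then (1 + (N:ℝ) * dist (g i) p) ^ (-(2*(d:ℝ))) else 0)
      ≤ 2 * (Cmin/2) ^ (-(2*(d:ℝ))) * (1+Cmax) ^ ((d:ℝ)) * (1 + (N:ℝ)*R) ^ (-(d:ℝ)) := by
    have hff := far_fin d hd (by positivity : (0:ℝ) < Cmin/2)
      (fun i => (N:ℝ) * dist (g i) p) (fun i => R ≤ dist (g i) p)
      (fun i => by
        have h := rho_lower (n := n) (N := N) (k := (i:ℕ)+1) (δ := dist p (g i))
          hd hCmin hn hx2N (by push_cast; exact (hg5 i).1)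
        show Cmin / 2 * (((i:ℕ):ℝ) + 1) ^ ((1:ℝ)/(d:ℝ)) ≤ (N:ℝ) * dist (g i) p
        rw [dist_comm]
        push_cast at h
        exact h)
      K hK1
      (fun i hcond => by
        have hcond' : R ≤ dist p (g i) := by rw [dist_comm]; exact hcond
        have h := k_ge_far (n := n) (k := (i:ℕ)+1) (δ := dist p (g i)) (R := R)
          hd hCmax hn hR (by push_cast; exact (hg5 i).2) hcond'
        push_cast at h
        have h2 : ⌈(n:ℝ) * (R/Cmax) ^ ((d:ℝ))⌉₊ ≤ (i:ℕ)+1 := by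
          rw [Nat.ceil_le]
          push_cast
          linarith
        omega)
    refine le_trans hff ?_
    have hinv : (2:ℝ)/K ≤ 2 * (1+Cmax) ^ ((d:ℝ)) / (1 + (N:ℝ)*R) ^ ((d:ℝ)) := by
      rw [div_le_div_iff₀ hK0 hP0]
      nlinarith
    have hc' : (0:ℝ) ≤ (Cmin/2) ^ (-(2*(d:ℝ))) := by positivity
    calc (Cmin/2) ^ (-(2*(d:ℝ))) * (2/K)
        ≤ (Cmin/2) ^ (-(2*(d:ℝ))) * (2 * (1+Cmax) ^ ((d:ℝ)) / (1 + (N:ℝ)*R) ^ ((d:ℝ))) :=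
          mul_le_mul_of_nonneg_left hinv hc'
      _ = 2 * (Cmin/2) ^ (-(2*(d:ℝ))) * (1+Cmax) ^ ((d:ℝ)) * (1 + (N:ℝ)*R) ^ (-(d:ℝ)) := by
          rw [Real.rpow_neg (by linarith : (0:ℝ) ≤ 1 + (N:ℝ)*R)]
          ring
  calc (if R ≤ dist p p then (1 + (N:ℝ) * dist p p) ^ (-(2*(d:ℝ))) else 0)
        + ∑ i : Fin (n-1),
          (if R ≤ dist (g i) p then (1 + (N:ℝ) * dist (g i) p) ^ (-(2*(d:ℝ))) else 0)
      ≤ (1 + (N:ℝ)*R) ^ (-(d:ℝ))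
        + 2 * (Cmin/2) ^ (-(2*(d:ℝ))) * (1+Cmax) ^ ((d:ℝ)) * (1 + (N:ℝ)*R) ^ (-(d:ℝ)) :=
        add_le_add hdiag htail
    _ = (1 + 2 * (Cmin/2) ^ (-(2*(d:ℝ))) * (1+Cmax) ^ ((d:ℝ))) * (1 + (N:ℝ)*R) ^ (-(d:ℝ)) := by
        ring

end points2

section points3
variable {d n N : ℕ} {Cmin Cmax ζ : ℝ} {D : Finset (Pt d)}

lemma point_all (hd : 1 ≤ d) (hCmin : 0 < Cmin) (hn : 1 ≤ n) (hζ : 0 < ζ)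
    (hQ : QuasiUniform d n Cmin Cmax D)
    (hx2N : ((n:ℝ) ^ ((1:ℝ)/(d:ℝ))) ≤ 2*(N:ℝ))
    (p : Pt d) (hp : p ∈ D) :
    ∑ u ∈ D, (1 + (N:ℝ) * dist u p) ^ (-((d:ℝ)+ζ))
      ≤ 1 + (Cmin/2) ^ (-((d:ℝ)+ζ)) * Tp d ζ := by
  obtain ⟨hcard, hQ2⟩ := hQ
  obtain ⟨g, hg1, hg2, hg3, -, hg5⟩ := hQ2 p hp
  rw [sum_enum hg1 hg2 hg3 hp]
  have hdiag : (1 + (N:ℝ) * dist p p) ^ (-((d:ℝ)+ζ)) = 1 := by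
    rw [dist_self]
    norm_num
  rw [hdiag]
  apply add_le_add_right
  have := all_fin d hd (by positivity : (0:ℝ) < Cmin/2) hζ
    (fun i => (N:ℝ) * dist (g i) p)
    (fun i => by
      have h := rho_lower (n := n) (N := N) (k := (i:ℕ)+1) (δ := dist p (g i))
        hd hCmin hn hx2N (by push_cast; exact (hg5 i).1)
      show Cmin / 2 * (((i:ℕ):ℝ) + 1) ^ ((1:ℝ)/(d:ℝ)) ≤ (N:ℝ) * dist (g i) p
      rw [dist_comm]
      push_cast at h
      exact h)
  exact this

end points3

noncomputable def cK0 (d : ℕ) (Cmin Cmax : ℝ) : ℝ :=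
  2^((d:ℝ)) * (1 + (Cmin/2)^(-(d:ℝ)) *
      (1 + d*Real.log (max 1 (2/Cmin)) + d*Real.log 2 + d))
    + (1 + 2*(Cmin/2)^(-(2*(d:ℝ)))*(1+Cmax)^((d:ℝ)))

noncomputable def cK1 (d : ℕ) (Cmin ζ : ℝ) : ℝ :=
  2^((d:ℝ)+ζ) * (1 + (Cmin/2)^(-((d:ℝ)+ζ)) * Tp d ζ)

noncomputable def cKone (d : ℕ) (Cmin Cmax ζ : ℝ) : ℝ := max (cK0 d Cmin Cmax) (cK1 d Cmin ζ)

lemma cK0_nonneg {d : ℕ} {Cmin Cmax : ℝ} (hCmin : 0 < Cmin) (hCmax : 0 < Cmax) :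
    0 ≤ cK0 d Cmin Cmax := by
  unfold cK0
  have h1 : 0 ≤ Real.log (max 1 (2/Cmin)) := Real.log_nonneg (le_max_left _ _)
  have h2 : 0 ≤ Real.log 2 := Real.log_nonneg one_le_two
  have h3 : (0:ℝ) ≤ (Cmin/2)^(-(d:ℝ)) := by positivity
  have h4 : (0:ℝ) ≤ (Cmin/2)^(-(2*(d:ℝ))) := by positivity
  have h5 : (0:ℝ) ≤ (1+Cmax)^((d:ℝ)) := by positivity
  have h6 : (0:ℝ) ≤ 2^((d:ℝ)) := by positivity
  have h7 : (0:ℝ) ≤ (d:ℝ) := by positivity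
  positivity

section onesided
variable {d n N : ℕ} {Cmin Cmax ζ : ℝ} {D : Finset (Pt d)}

set_option maxHeartbeats 2000000 in
lemma onesided (hd : 1 ≤ d) (hCmin : 0 < Cmin) (hCmax : 0 < Cmax) (hζ : 0 ≤ ζ)
    (hn : 1 ≤ n) (hQ : QuasiUniform d n Cmin Cmax D)
    (hx2N : ((n:ℝ) ^ ((1:ℝ)/(d:ℝ))) ≤ 2*(N:ℝ))
    (hNx : (N:ℝ) ≤ (n:ℝ) ^ ((1:ℝ)/(d:ℝ)))
    (s t : Pt d) (hs : s ∈ D) (ht : t ∈ D) :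
    ∑ u ∈ D.filter (fun u => dist u t ≤ dist u s),
        (1 + (N:ℝ)*dist u s) ^ (-((d:ℝ)+ζ)) * (1 + (N:ℝ)*dist u t) ^ (-((d:ℝ)+ζ))
      ≤ cKone d Cmin Cmax ζ * (1 + (N:ℝ)*dist s t) ^ (-((d:ℝ)+ζ)) *
        (1 + if ζ = 0 then Real.log (1 + (N:ℝ)*dist s t) else 0) := by
  have hd0 : (0:ℝ) < (d:ℝ) := by exact_mod_cast hd
  set e : ℝ := (d:ℝ) + ζ with hedef
  have he0 : 0 < e := by rw [hedef]; linarith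
  set r : ℝ := dist s t with hrdef
  have hr0 : 0 ≤ r := dist_nonneg
  set m : ℝ := (N:ℝ) * r with hmdef
  have hm0 : 0 ≤ m := by positivity
  have hfilt : ∀ u ∈ D.filter (fun u => dist u t ≤ dist u s), 1 + m ≤ 2 * (1 + (N:ℝ)*dist u s) := by
    intro u hu
    rw [Finset.mem_filter] at hu
    have htri : dist s t ≤ dist u s + dist u t := by
      calc dist s t ≤ dist s u + dist u t := dist_triangle s u t
        _ = dist u s + dist u t := by rw [dist_comm s u]
    have h2 : r ≤ 2 * dist u s := by
      rw [hrdef]; linarith [hu.2]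
    have h3 : m ≤ (N:ℝ) * (2 * dist u s) :=
      mul_le_mul_of_nonneg_left h2 (by positivity)
    nlinarith
  have half_bound : ∀ y : ℝ, 0 ≤ y → 1 + m ≤ 2 * (1 + y) →
      (1 + y) ^ (-e) ≤ 2^e * (1 + m) ^ (-e) := by
    intro y hy h
    have h1 : (1+m)/2 ≤ 1+y := by linarith
    have h2 : (0:ℝ) < (1+m)/2 := by positivity
    calc (1+y)^(-e) ≤ ((1+m)/2)^(-e) :=
          Real.rpow_le_rpow_of_nonpos h2 h1 (neg_nonpos.mpr he0.le)
      _ = 2^e * (1+m)^(-e) := by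
          rw [Real.div_rpow (by positivity) (by norm_num : (0:ℝ) ≤ 2),
            Real.rpow_neg (by norm_num : (0:ℝ) ≤ 2), div_eq_mul_inv, inv_inv]
          ring
  have hFus : ∀ u ∈ D.filter (fun u => dist u t ≤ dist u s),
      (1 + (N:ℝ)*dist u s) ^ (-e) ≤ 2^e * (1 + m) ^ (-e) := by
    intro u hu
    exact half_bound _ (by positivity) (hfilt u hu)
  by_cases hζ0 : ζ = 0
  · -- ζ = 0 branch
    subst hζ0
    rw [if_pos rfl]
    have heeq : e = (d:ℝ) := by rw [hedef, add_zero]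
    rw [heeq] at hFus ⊢
    set X : ℝ := (1 + m) ^ (-(d:ℝ)) with hXdef
    have hX0 : 0 ≤ X := by positivity
    set L : ℝ := Real.log (1 + m) with hLdef
    have hL0 : 0 ≤ L := Real.log_nonneg (by linarith)
    set c₅ : ℝ := max 1 (2/Cmin) with hc5def
    set A₁ : ℝ := 1 + (Cmin/2)^(-(d:ℝ)) * (1 + d*Real.log c₅ + d*Real.log 2) with hA1def
    set A₂ : ℝ := (Cmin/2)^(-(d:ℝ)) * d with hA2def
    have hA10 : 0 ≤ A₁ := by
      have h1 : 0 ≤ Real.log c₅ := Real.log_nonneg (le_max_left _ _)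
      have h2 : 0 ≤ Real.log 2 := Real.log_nonneg one_le_two
      have h3 : (0:ℝ) ≤ (Cmin/2)^(-(d:ℝ)) := by positivity
      rw [hA1def]
      positivity
    have hA20 : 0 ≤ A₂ := by rw [hA2def]; positivity
    set Kf : ℝ := 1 + 2*(Cmin/2)^(-(2*(d:ℝ)))*(1+Cmax)^((d:ℝ)) with hKfdef
    have hKf0 : 0 ≤ Kf := by rw [hKfdef]; positivity
    rw [← Finset.sum_filter_add_sum_filter_not
      (D.filter (fun u => dist u t ≤ dist u s)) (fun u => dist u t ≤ 2*r)]
    have hnear : ∑ u ∈ (D.filter (fun u => dist u t ≤ dist u s)).filter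
          (fun u => dist u t ≤ 2*r),
          (1 + (N:ℝ)*dist u s) ^ (-(d:ℝ)) * (1 + (N:ℝ)*dist u t) ^ (-(d:ℝ))
        ≤ 2^((d:ℝ)) * X * (A₁ + A₂ * L) := by
      calc ∑ u ∈ (D.filter (fun u => dist u t ≤ dist u s)).filter (fun u => dist u t ≤ 2*r),
            (1 + (N:ℝ)*dist u s) ^ (-(d:ℝ)) * (1 + (N:ℝ)*dist u t) ^ (-(d:ℝ))
          ≤ ∑ u ∈ (D.filter (fun u => dist u t ≤ dist u s)).filter (fun u => dist u t ≤ 2*r),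
            (2^((d:ℝ)) * X) * (1 + (N:ℝ)*dist u t) ^ (-(d:ℝ)) := by
            apply Finset.sum_le_sum
            intro u hu
            have hu' := Finset.mem_of_mem_filter u hu
            exact mul_le_mul_of_nonneg_right (hFus u hu') (by positivity)
        _ = (2^((d:ℝ)) * X) * ∑ u ∈ (D.filter (fun u => dist u t ≤ dist u s)).filter
              (fun u => dist u t ≤ 2*r), (1 + (N:ℝ)*dist u t) ^ (-(d:ℝ)) := by
            rw [Finset.mul_sum]
        _ ≤ (2^((d:ℝ)) * X) * (A₁ + A₂ * L) := by
            apply mul_le_mul_of_nonneg_left _ (by positivity)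
            have hsub : ∑ u ∈ (D.filter (fun u => dist u t ≤ dist u s)).filter
                  (fun u => dist u t ≤ 2*r), (1 + (N:ℝ)*dist u t) ^ (-(d:ℝ))
                ≤ ∑ u ∈ D.filter (fun u => dist u t ≤ 2*r),
                  (1 + (N:ℝ)*dist u t) ^ (-(d:ℝ)) := by
              apply Finset.sum_le_sum_of_subset_of_nonneg
              · intro u hu
                simp only [Finset.mem_filter] at hu ⊢
                exact ⟨hu.1.1, hu.2⟩
              · intros; positivity
            have hpn := point_near (N := N) hd hCmin hn ⟨hQ.1, hQ.2⟩ hx2N t ht (2*r)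
              (by linarith)
            rw [← Finset.sum_filter] at hpn
            rw [← hc5def] at hpn
            have hlog2 : Real.log (1 + (N:ℝ)*(2*r)) ≤ Real.log 2 + L := by
              have h1 : 1 + (N:ℝ)*(2*r) ≤ 2*(1+m) := by rw [hmdef]; ring_nf; linarith
              have h2 : Real.log (1 + (N:ℝ)*(2*r)) ≤ Real.log (2*(1+m)) :=
                Real.log_le_log (by positivity) h1
              rw [Real.log_mul (by norm_num) (by linarith)] at h2
              rw [hLdef]
              linarith
            have hd0' : (0:ℝ) ≤ (Cmin/2)^(-(d:ℝ)) := by positivity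
            calc ∑ u ∈ (D.filter (fun u => dist u t ≤ dist u s)).filter
                  (fun u => dist u t ≤ 2*r), (1 + (N:ℝ)*dist u t) ^ (-(d:ℝ))
                ≤ 1 + (Cmin/2)^(-(d:ℝ)) *
                    (1 + d*Real.log c₅ + d*Real.log (1 + (N:ℝ)*(2*r))) :=
                  le_trans hsub hpn
              _ ≤ A₁ + A₂ * L := by
                  rw [hA1def, hA2def]
                  have h3 : (d:ℝ)*Real.log (1 + (N:ℝ)*(2*r)) ≤ d*Real.log 2 + d*L := by
                    have := mul_le_mul_of_nonneg_left hlog2 (le_of_lt hd0)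
                    linarith [this]
                  nlinarith
    have hfar : ∑ u ∈ (D.filter (fun u => dist u t ≤ dist u s)).filter
          (fun u => ¬ dist u t ≤ 2*r),
          (1 + (N:ℝ)*dist u s) ^ (-(d:ℝ)) * (1 + (N:ℝ)*dist u t) ^ (-(d:ℝ))
        ≤ Kf * X := by
      have hstep : ∀ u ∈ (D.filter (fun u => dist u t ≤ dist u s)).filter
            (fun u => ¬ dist u t ≤ 2*r),
          (1 + (N:ℝ)*dist u s) ^ (-(d:ℝ)) * (1 + (N:ℝ)*dist u t) ^ (-(d:ℝ))
            ≤ (1 + (N:ℝ)*dist u t) ^ (-(2*(d:ℝ))) := by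
        intro u hu
        simp only [Finset.mem_filter] at hu
        have h1 : dist u t ≤ dist u s := hu.1.2
        have h2 : (1 + (N:ℝ)*dist u t) ≤ (1 + (N:ℝ)*dist u s) := by
          have := mul_le_mul_of_nonneg_left h1 (by positivity : (0:ℝ) ≤ (N:ℝ))
          linarith
        have h3 : (1 + (N:ℝ)*dist u s) ^ (-(d:ℝ)) ≤ (1 + (N:ℝ)*dist u t) ^ (-(d:ℝ)) :=
          Real.rpow_le_rpow_of_nonpos (by positivity) h2 (neg_nonpos.mpr hd0.le)
        have h4 : (1 + (N:ℝ)*dist u t) ^ (-(d:ℝ)) * (1 + (N:ℝ)*dist u t) ^ (-(d:ℝ))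
            = (1 + (N:ℝ)*dist u t) ^ (-(2*(d:ℝ))) := by
          rw [← Real.rpow_add (by positivity)]
          ring_nf
        calc (1 + (N:ℝ)*dist u s) ^ (-(d:ℝ)) * (1 + (N:ℝ)*dist u t) ^ (-(d:ℝ))
            ≤ (1 + (N:ℝ)*dist u t) ^ (-(d:ℝ)) * (1 + (N:ℝ)*dist u t) ^ (-(d:ℝ)) :=
              mul_le_mul_of_nonneg_right h3 (by positivity)
          _ = (1 + (N:ℝ)*dist u t) ^ (-(2*(d:ℝ))) := h4
      have hpf := point_far (N := N) hd hCmin hCmax hn ⟨hQ.1, hQ.2⟩ hx2N hNx t ht (2*r)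
        (by linarith)
      calc ∑ u ∈ (D.filter (fun u => dist u t ≤ dist u s)).filter
            (fun u => ¬ dist u t ≤ 2*r),
            (1 + (N:ℝ)*dist u s) ^ (-(d:ℝ)) * (1 + (N:ℝ)*dist u t) ^ (-(d:ℝ))
          ≤ ∑ u ∈ (D.filter (fun u => dist u t ≤ dist u s)).filter
            (fun u => ¬ dist u t ≤ 2*r), (1 + (N:ℝ)*dist u t) ^ (-(2*(d:ℝ))) :=
            Finset.sum_le_sum hstep
        _ ≤ ∑ u ∈ D.filter (fun u => 2*r ≤ dist u t), (1 + (N:ℝ)*dist u t) ^ (-(2*(d:ℝ))) := by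
            apply Finset.sum_le_sum_of_subset_of_nonneg
            · intro u hu
              simp only [Finset.mem_filter] at hu ⊢
              exact ⟨hu.1.1, le_of_not_ge hu.2⟩
            · intros; positivity
        _ ≤ (1 + 2*(Cmin/2)^(-(2*(d:ℝ)))*(1+Cmax)^((d:ℝ))) * (1 + (N:ℝ)*(2*r)) ^ (-(d:ℝ)) := by
            rw [Finset.sum_filter]
            exact hpf
        _ ≤ Kf * X := by
            rw [hKfdef, hXdef]
            apply mul_le_mul_of_nonneg_left _ (by positivity)
            apply Real.rpow_le_rpow_of_nonpos (by positivity) _ (neg_nonpos.mpr hd0.le)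
            rw [hmdef]
            nlinarith [hr0, Nat.cast_nonneg (α := ℝ) N]
    have hcK0 : cK0 d Cmin Cmax = 2^((d:ℝ))*A₁ + 2^((d:ℝ))*A₂ + Kf := by
      rw [hA1def, hA2def, hKfdef, hc5def]
      unfold cK0
      ring
    have h2d : (0:ℝ) ≤ 2^((d:ℝ)) := by positivity
    have hXL0 : 0 ≤ X * (1 + L) := mul_nonneg hX0 (by linarith)
    calc (∑ u ∈ (D.filter (fun u => dist u t ≤ dist u s)).filter
            (fun u => dist u t ≤ 2*r),
            (1 + (N:ℝ)*dist u s) ^ (-(d:ℝ)) * (1 + (N:ℝ)*dist u t) ^ (-(d:ℝ)))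
          + ∑ u ∈ (D.filter (fun u => dist u t ≤ dist u s)).filter
            (fun u => ¬ dist u t ≤ 2*r),
            (1 + (N:ℝ)*dist u s) ^ (-(d:ℝ)) * (1 + (N:ℝ)*dist u t) ^ (-(d:ℝ))
        ≤ 2^((d:ℝ)) * X * (A₁ + A₂ * L) + Kf * X := add_le_add hnear hfar
      _ ≤ cK0 d Cmin Cmax * (X * (1 + L)) := by
          rw [hcK0]
          nlinarith [mul_nonneg (mul_nonneg h2d hA10) (mul_nonneg hX0 hL0),
            mul_nonneg (mul_nonneg h2d hA20) hX0,
            mul_nonneg (mul_nonneg hKf0 hX0) hL0]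
      _ ≤ cKone d Cmin Cmax 0 * (X * (1 + L)) :=
          mul_le_mul_of_nonneg_right (le_max_left _ _) hXL0
      _ = cKone d Cmin Cmax 0 * X * (1 + L) := by ring
  · -- ζ > 0 branch
    have hζpos : 0 < ζ := lt_of_le_of_ne hζ (Ne.symm hζ0)
    rw [if_neg hζ0]
    have hcK1 : cK1 d Cmin ζ = 2^e * (1 + (Cmin/2)^(-e) * Tp d ζ) := by
      rw [hedef]
      rfl
    have hY0 : (0:ℝ) ≤ (1+m)^(-e) := by positivity
    have hTp0 : 0 ≤ 1 + (Cmin/2)^(-e) * Tp d ζ := by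
      have h1 : 0 ≤ Tp d ζ := by
        unfold Tp
        apply tsum_nonneg
        intro k
        positivity
      have h2 : (0:ℝ) ≤ (Cmin/2)^(-e) := by positivity
      nlinarith
    calc ∑ u ∈ D.filter (fun u => dist u t ≤ dist u s),
          (1 + (N:ℝ)*dist u s) ^ (-e) * (1 + (N:ℝ)*dist u t) ^ (-e)
        ≤ ∑ u ∈ D.filter (fun u => dist u t ≤ dist u s),
          (2^e * (1+m)^(-e)) * (1 + (N:ℝ)*dist u t) ^ (-e) := by
          apply Finset.sum_le_sum
          intro u hu
          exact mul_le_mul_of_nonneg_right (hFus u hu) (by positivity)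
      _ = (2^e * (1+m)^(-e)) * ∑ u ∈ D.filter (fun u => dist u t ≤ dist u s),
          (1 + (N:ℝ)*dist u t) ^ (-e) := by rw [Finset.mul_sum]
      _ ≤ (2^e * (1+m)^(-e)) * (1 + (Cmin/2)^(-e) * Tp d ζ) := by
          apply mul_le_mul_of_nonneg_left _ (by positivity)
          have hsub : ∑ u ∈ D.filter (fun u => dist u t ≤ dist u s),
              (1 + (N:ℝ)*dist u t) ^ (-e) ≤ ∑ u ∈ D, (1 + (N:ℝ)*dist u t) ^ (-e) := by
            apply Finset.sum_le_sum_of_subset_of_nonneg (Finset.filter_subset _ _)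
            intros; positivity
          have hpa := point_all (N := N) hd hCmin hn hζpos ⟨hQ.1, hQ.2⟩ hx2N t ht
          rw [← hedef] at hpa
          exact le_trans hsub hpa
      _ = cK1 d Cmin ζ * (1+m)^(-e) := by rw [hcK1]; ring
      _ ≤ cKone d Cmin Cmax ζ * (1+m)^(-e) :=
          mul_le_mul_of_nonneg_right (le_max_right _ _) hY0
      _ = cKone d Cmin Cmax ζ * (1+m)^(-e) * (1 + 0) := by ring

end onesided

end LemC1

/-- **Lemma C.1.**  If the entries of `A` decay polynomially off the diagonal,
`|A_{s,t}| ≤ C (1 + N‖t-s‖)^{-(d+ζ)}`, on a quasi-uniform set `Dₙ`, then the entries of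
`B = A²` satisfy `|B_{s,t}| ≤ C'' (1 + N‖t-s‖)^{-(d+ζ)} (1 + [ζ = 0] log(1 + N‖t-s‖))` for a
bounded constant `C''` depending only on `C, d, ζ` and the quasi-uniformity constants. -/
theorem stmt12 (d : ℕ) (Cmin Cmax C ζ : ℝ)
    (hd : 1 ≤ d) (hCmin : 0 < Cmin) (hCC : Cmin ≤ Cmax) (hC : 0 < C) (hζ : 0 ≤ ζ) :
    ∃ C'' : ℝ, 0 < C'' ∧
      ∀ (n : ℕ) (D : Finset (Pt d)), QuasiUniform d n Cmin Cmax D →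
        ∀ A : Matrix D D ℝ,
          (∀ s t : D,
            |A s t| ≤ C * (1 + (Nof d n : ℝ) * ‖(t : Pt d) - (s : Pt d)‖) ^ (-((d : ℝ) + ζ))) →
          ∀ s t : D,
            |(A * A) s t| ≤
              C'' * (1 + (Nof d n : ℝ) * ‖(t : Pt d) - (s : Pt d)‖) ^ (-((d : ℝ) + ζ)) *
                (1 + if ζ = 0 then
                      Real.log (1 + (Nof d n : ℝ) * ‖(t : Pt d) - (s : Pt d)‖) else 0) := by
  have hCmax : 0 < Cmax := lt_of_lt_of_le hCmin hCC
  have hK0 : 0 ≤ LemC1.cKone d Cmin Cmax ζ :=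
    le_trans (LemC1.cK0_nonneg hCmin hCmax) (le_max_left _ _)
  refine ⟨2*C^2*(LemC1.cKone d Cmin Cmax ζ) + 1, ?_, ?_⟩
  · nlinarith [sq_nonneg C]
  intro n D hQ A hA s t
  have hn : 1 ≤ n := by
    rw [← hQ.1]
    exact Finset.card_pos.mpr ⟨(s:Pt d), s.2⟩
  set N : ℕ := Nof d n with hNdef
  obtain ⟨hx1, hxd⟩ := LemC1.xfacts (n := n) hd hn
  set x : ℝ := (n:ℝ) ^ ((1:ℝ)/(d:ℝ)) with hxdef
  have hNx : (N:ℝ) ≤ x := Nat.floor_le (by positivity)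
  have hN1 : 1 ≤ N := Nat.le_floor (by exact_mod_cast hx1)
  have hN1' : (1:ℝ) ≤ N := by exact_mod_cast hN1
  have hx2N : x ≤ 2*(N:ℝ) := by
    have h := Nat.lt_floor_add_one x
    have : (⌊x⌋₊ : ℝ) = (N:ℝ) := by rw [hNdef]; rfl
    linarith [h, hN1', this]
  set e : ℝ := (d:ℝ) + ζ with hedef
  have he0 : 0 < e := by
    have : (0:ℝ) < (d:ℝ) := by exact_mod_cast hd
    rw [hedef]; linarith
  have hts : ‖(t:Pt d) - (s:Pt d)‖ = dist (s:Pt d) (t:Pt d) := by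
    rw [dist_comm, dist_eq_norm]
  rw [hts]
  set r : ℝ := dist (s:Pt d) (t:Pt d) with hrdef
  have hr0 : 0 ≤ r := dist_nonneg
  set Z : ℝ := (1 + (N:ℝ)*r) ^ (-e) with hZdef
  have hZ0 : 0 ≤ Z := by rw [hZdef]; positivity
  set W : ℝ := 1 + (if ζ = 0 then Real.log (1 + (N:ℝ)*r) else 0) with hWdef
  have hW0 : 0 ≤ W := by
    rw [hWdef]
    split
    · have hnr : (0:ℝ) ≤ (N:ℝ)*r := by positivity
      have : 0 ≤ Real.log (1 + (N:ℝ)*r) := Real.log_nonneg (by linarith)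
      linarith
    · norm_num
  -- step 1
  have hstep1 : |(A*A) s t| ≤ C^2 *
      ∑ u ∈ D, (1+(N:ℝ)*dist u (s:Pt d))^(-e) * (1+(N:ℝ)*dist u (t:Pt d))^(-e) := by
    rw [Matrix.mul_apply]
    calc |∑ u : {x // x ∈ D}, A s u * A u t|
        ≤ ∑ u : {x // x ∈ D}, |A s u * A u t| := Finset.abs_sum_le_sum_abs _ _
      _ ≤ ∑ u : {x // x ∈ D}, C^2 *
          ((1+(N:ℝ)*dist (u:Pt d) (s:Pt d))^(-e) * (1+(N:ℝ)*dist (u:Pt d) (t:Pt d))^(-e)) := by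
          apply Finset.sum_le_sum
          intro u _
          rw [abs_mul]
          have h1 := hA s u
          have h2 := hA u t
          rw [show ‖(u:Pt d) - (s:Pt d)‖ = dist (u:Pt d) (s:Pt d) from (dist_eq_norm _ _).symm] at h1
          rw [show ‖(t:Pt d) - (u:Pt d)‖ = dist (u:Pt d) (t:Pt d) from by
            rw [dist_comm, dist_eq_norm]] at h2
          calc |A s u| * |A u t|
              ≤ (C * (1+(N:ℝ)*dist (u:Pt d) (s:Pt d))^(-e)) *
                (C * (1+(N:ℝ)*dist (u:Pt d) (t:Pt d))^(-e)) :=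
                mul_le_mul h1 h2 (abs_nonneg _) (by positivity)
            _ = C^2 * ((1+(N:ℝ)*dist (u:Pt d) (s:Pt d))^(-e) *
                (1+(N:ℝ)*dist (u:Pt d) (t:Pt d))^(-e)) := by ring
      _ = C^2 * ∑ u ∈ D, (1+(N:ℝ)*dist u (s:Pt d))^(-e) * (1+(N:ℝ)*dist u (t:Pt d))^(-e) := by
          rw [← Finset.mul_sum]
          congr 1
          exact Finset.sum_coe_sort D
            (fun u => (1+(N:ℝ)*dist u (s:Pt d))^(-e) * (1+(N:ℝ)*dist u (t:Pt d))^(-e))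
  -- step 2
  have hone := LemC1.onesided (N := N) hd hCmin hCmax hζ hn hQ hx2N hNx
    (s:Pt d) (t:Pt d) s.2 t.2
  have htwo' := LemC1.onesided (N := N) hd hCmin hCmax hζ hn hQ hx2N hNx
    (t:Pt d) (s:Pt d) t.2 s.2
  rw [dist_comm (t:Pt d) (s:Pt d)] at htwo'
  rw [← hedef, ← hrdef] at hone htwo'
  rw [← hZdef, ← hWdef] at hone htwo'
  have htwo : ∑ u ∈ D.filter (fun u => ¬ dist u (t:Pt d) ≤ dist u (s:Pt d)),
      (1+(N:ℝ)*dist u (s:Pt d))^(-e) * (1+(N:ℝ)*dist u (t:Pt d))^(-e)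
      ≤ LemC1.cKone d Cmin Cmax ζ * Z * W := by
    calc ∑ u ∈ D.filter (fun u => ¬ dist u (t:Pt d) ≤ dist u (s:Pt d)),
        (1+(N:ℝ)*dist u (s:Pt d))^(-e) * (1+(N:ℝ)*dist u (t:Pt d))^(-e)
        ≤ ∑ u ∈ D.filter (fun u => dist u (s:Pt d) ≤ dist u (t:Pt d)),
          (1+(N:ℝ)*dist u (s:Pt d))^(-e) * (1+(N:ℝ)*dist u (t:Pt d))^(-e) := by
          apply Finset.sum_le_sum_of_subset_of_nonneg
          · intro u hu
            simp only [Finset.mem_filter] at hu ⊢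
            exact ⟨hu.1, le_of_not_ge hu.2⟩
          · intros; positivity
      _ = ∑ u ∈ D.filter (fun u => dist u (s:Pt d) ≤ dist u (t:Pt d)),
          (1+(N:ℝ)*dist u (t:Pt d))^(-e) * (1+(N:ℝ)*dist u (s:Pt d))^(-e) :=
          Finset.sum_congr rfl (fun u _ => mul_comm _ _)
      _ ≤ LemC1.cKone d Cmin Cmax ζ * Z * W := htwo'
  have hsplit := Finset.sum_filter_add_sum_filter_not D
    (fun u => dist u (t:Pt d) ≤ dist u (s:Pt d))
    (fun u => (1+(N:ℝ)*dist u (s:Pt d))^(-e) * (1+(N:ℝ)*dist u (t:Pt d))^(-e))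
  calc |(A*A) s t| ≤ C^2 *
      ∑ u ∈ D, (1+(N:ℝ)*dist u (s:Pt d))^(-e) * (1+(N:ℝ)*dist u (t:Pt d))^(-e) := hstep1
    _ ≤ C^2 * (2 * (LemC1.cKone d Cmin Cmax ζ * Z * W)) := by
        apply mul_le_mul_of_nonneg_left _ (by positivity)
        rw [← hsplit]
        have := add_le_add hone htwo
        linarith
    _ ≤ (2*C^2*(LemC1.cKone d Cmin Cmax ζ) + 1) * Z * W := by
        have hZW : 0 ≤ Z * W := mul_nonneg hZ0 hW0
        nlinarith [mul_nonneg hZ0 hW0, sq_nonneg C]
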